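/- Let X be a uniformly convex Banach space, Ω, Δ nonempty, closed and convex subsets of X, and Ξ : X → X a cyclic orbital contraction on Ω ∪ Δ with constant η ∈ (0,1). Fix ς₀ ∈ Ω and define ς_{n+1} = Ξς_n for all n ≥ 0. Then ‖ς_{2n} − ς_{2n+2}‖ → 0 and ‖ς_{2n+1} − ς_{2n+3}‖ → 0 as n → ∞. -/

import Mathlib

open Filter Metric

private lemma aux_uc_tendsto {E : Type*} [NormedAddCommGroup E] [NormedSpace ℝ E]
    [UniformConvexSpace E] {d : ℝ} (hd : 0 ≤ d) {a b : ℕ → E}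
    (ha : Tendsto (fun n => ‖a n‖) atTop (nhds d))
    (hb : Tendsto (fun n => ‖b n‖) atTop (nhds d))
    (hab : ∀ n, 2 * d ≤ ‖a n + b n‖) :
    Tendsto (fun n => ‖a n - b n‖) atTop (nhds 0) := by
  rcases eq_or_lt_of_le hd with hd0 | hd0
  · have hsum : Tendsto (fun n => ‖a n‖ + ‖b n‖) atTop (nhds 0) := by
      have := ha.add hb
      rw [← hd0] at this
      simpa using this
    exact squeeze_zero (fun n => norm_nonneg _) (fun n => norm_sub_le _ _) hsum
  · have key : ∀ ε > (0 : ℝ), ∀ᶠ n in atTop, ‖a n - b n‖ < ε := by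
      intro ε hε
      obtain ⟨δ, hδ, hδ'⟩ := exists_forall_closed_ball_dist_add_le_two_sub E
        (show (0 : ℝ) < ε / (d + 1) from div_pos hε (by linarith))
      set τ : ℝ := min 1 (δ * d / 4) with hτdef
      have hτpos : 0 < τ := lt_min one_pos (by positivity)
      have hτle : τ ≤ δ * d / 4 := min_le_right _ _
      have hτ1 : τ ≤ 1 := min_le_left _ _
      set R : ℝ := d + τ with hRdef
      have hRpos : 0 < R := by rw [hRdef]; linarith
      have hRle : R ≤ d + 1 := by rw [hRdef]; linarith
      have haev : ∀ᶠ n in atTop, ‖a n‖ ≤ R := ha.eventually (eventually_le_nhds (by linarith))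
      have hbev : ∀ᶠ n in atTop, ‖b n‖ ≤ R := hb.eventually (eventually_le_nhds (by linarith))
      filter_upwards [haev, hbev] with n hna hnb
      by_contra hcon
      push_neg at hcon
      set x : E := R⁻¹ • a n with hxdef
      set y : E := R⁻¹ • b n with hydef
      have hnormx : ‖x‖ = ‖a n‖ / R := by
        rw [hxdef, norm_smul, Real.norm_eq_abs, abs_of_pos (inv_pos.2 hRpos), inv_mul_eq_div]
      have hnormy : ‖y‖ = ‖b n‖ / R := by
        rw [hydef, norm_smul, Real.norm_eq_abs, abs_of_pos (inv_pos.2 hRpos), inv_mul_eq_div]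
      have hx1 : ‖x‖ ≤ 1 := by rw [hnormx]; exact (div_le_one hRpos).2 hna
      have hy1 : ‖y‖ ≤ 1 := by rw [hnormy]; exact (div_le_one hRpos).2 hnb
      have hxy : ε / (d + 1) ≤ ‖x - y‖ := by
        have hsub : x - y = R⁻¹ • (a n - b n) := by rw [hxdef, hydef, smul_sub]
        have : ‖x - y‖ = ‖a n - b n‖ / R := by
          rw [hsub, norm_smul, Real.norm_eq_abs, abs_of_pos (inv_pos.2 hRpos), inv_mul_eq_div]
        rw [this]
        calc ε / (d + 1) ≤ ε / R := by gcongr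
          _ ≤ ‖a n - b n‖ / R := by gcongr
      have h2 : ‖x + y‖ ≤ 2 - δ := hδ' hx1 hy1 hxy
      have hadd : ‖a n + b n‖ = R * ‖x + y‖ := by
        have : x + y = R⁻¹ • (a n + b n) := by rw [hxdef, hydef, smul_add]
        rw [this, norm_smul, Real.norm_eq_abs, abs_of_pos (inv_pos.2 hRpos)]
        field_simp
      have h3 : ‖a n + b n‖ ≤ R * (2 - δ) := by
        rw [hadd]
        exact mul_le_mul_of_nonneg_left h2 hRpos.le
      have h4 := hab n
      have hδR : δ * d ≤ δ * R := by
        apply mul_le_mul_of_nonneg_left _ hδ.le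
        rw [hRdef]; linarith
      nlinarith [mul_pos hδ hd0]
    rw [Metric.tendsto_nhds]
    intro ε hε
    filter_upwards [key ε hε] with n hn
    rwa [Real.dist_eq, sub_zero, abs_of_nonneg (norm_nonneg _)]

theorem stmt10 {X : Type*} [NormedAddCommGroup X] [NormedSpace ℝ X] [UniformConvexSpace X]
    [CompleteSpace X] (Ω Δ : Set X) (hΩ : Ω.Nonempty) (hΔ : Δ.Nonempty)
    (hΩc : IsClosed Ω) (hΔc : IsClosed Δ) (hΩconv : Convex ℝ Ω) (hΔconv : Convex ℝ Δ)
    (Ξ : X → X) (η : ℝ) (hη : η ∈ Set.Ioo (0 : ℝ) 1)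
    (hcycΩ : Set.MapsTo Ξ Ω Δ) (hcycΔ : Set.MapsTo Ξ Δ Ω)
    (hbdd : ∀ x : X, Bornology.IsBounded (Set.range fun n => Ξ^[n] x))
    (hcontr : ∀ ς ∈ Ω, ∀ ϑ ∈ Δ,
      ‖Ξ ς - Ξ ϑ‖ ≤ η * sSup { r : ℝ |
      (∃ i j : ℕ, Odd ((i : ℤ) - j) ∧ r = ‖Ξ^[i] ς - Ξ^[j] ς‖) ∨
      (∃ k l : ℕ, Odd ((k : ℤ) - l) ∧ r = ‖Ξ^[k] ϑ - Ξ^[l] ϑ‖) ∨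
      (∃ p q : ℕ, Even ((p : ℤ) - q) ∧ r = ‖Ξ^[p] ς - Ξ^[q] ϑ‖) }
        + (1 - η) * sInf (Set.image2 (fun x y => ‖x - y‖) Ω Δ))
    (ς₀ : X) (hς₀ : ς₀ ∈ Ω) :
    Tendsto (fun n => ‖Ξ^[2 * n] ς₀ - Ξ^[2 * n + 2] ς₀‖) atTop (nhds 0) ∧
      Tendsto (fun n => ‖Ξ^[2 * n + 1] ς₀ - Ξ^[2 * n + 3] ς₀‖) atTop (nhds 0) := by
  obtain ⟨hη0, hη1⟩ := hη
  set f : ℕ → X := fun n => Ξ^[n] ς₀ with hf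
  set D : ℝ := sInf (Set.image2 (fun x y => ‖x - y‖) Ω Δ) with hD
  -- membership of the orbit
  have hmem : ∀ n : ℕ, (Even n → f n ∈ Ω) ∧ (Odd n → f n ∈ Δ) := by
    intro n
    induction n with
    | zero => exact ⟨fun _ => hς₀, fun h => absurd h (by simp)⟩
    | succ n ih =>
      have hstep : f (n + 1) = Ξ (f n) := by
        simp only [hf, Function.iterate_succ_apply']
      rw [hstep]
      constructor
      · intro h
        have hodd : Odd n := by
          rcases Nat.even_or_odd n with h' | h'
          · exfalso; rw [Nat.even_iff] at h h'; omega
          · exact h'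
        exact hcycΔ (ih.2 hodd)
      · intro h
        have heven : Even n := by
          rcases Nat.even_or_odd n with h' | h'
          · exact h'
          · exfalso; rw [Nat.odd_iff] at h h'; omega
        exact hcycΩ (ih.1 heven)
  -- the distance D is a nonneg lower bound
  have hbdbelow : BddBelow (Set.image2 (fun x y : X => ‖x - y‖) Ω Δ) := by
    refine ⟨0, ?_⟩
    rintro r ⟨u, hu, v, hv, rfl⟩
    exact norm_nonneg _
  have hDnonneg : 0 ≤ D := by
    apply le_csInf (hΩ.image2 hΔ)
    rintro r ⟨u, hu, v, hv, rfl⟩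
    exact norm_nonneg _
  have hDlb : ∀ x ∈ Ω, ∀ y ∈ Δ, D ≤ ‖x - y‖ := fun x hx y hy =>
    csInf_le hbdbelow ⟨x, hx, y, hy, rfl⟩
  -- the orbit is bounded
  obtain ⟨C, hC⟩ := isBounded_iff_forall_norm_le.1 (hbdd ς₀)
  have hCf : ∀ n, ‖f n‖ ≤ C := fun n => hC _ ⟨n, rfl⟩
  -- the auxiliary sets and suprema
  set T : ℕ → Set ℝ := fun n =>
    {v | ∃ a b : ℕ, n ≤ a ∧ n ≤ b ∧ Odd ((a : ℤ) - b) ∧ v = ‖f a - f b‖} with hT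
  set r : ℕ → ℝ := fun n => sSup (T n) with hr
  have hTne : ∀ n, (T n).Nonempty := by
    intro n
    exact ⟨‖f n - f (n + 1)‖, n, n + 1, le_rfl, n.le_succ, by
      rw [Int.odd_iff]; push_cast; omega, rfl⟩
  have hTbdd : ∀ n, BddAbove (T n) := by
    intro n
    refine ⟨2 * C, ?_⟩
    rintro v ⟨a, b, -, -, -, rfl⟩
    calc ‖f a - f b‖ ≤ ‖f a‖ + ‖f b‖ := norm_sub_le _ _
      _ ≤ 2 * C := by have := hCf a; have := hCf b; linarith
  have hDleT : ∀ n, ∀ v ∈ T n, D ≤ v := by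
    rintro n v ⟨a, b, -, -, hodd, rfl⟩
    rcases Nat.even_or_odd a with haE | haO
    · have hbO : Odd b := by
        rw [Nat.odd_iff]; rw [Nat.even_iff] at haE; rw [Int.odd_iff] at hodd; omega
      exact hDlb _ ((hmem a).1 haE) _ ((hmem b).2 hbO)
    · have hbE : Even b := by
        rw [Nat.even_iff]; rw [Nat.odd_iff] at haO; rw [Int.odd_iff] at hodd; omega
      rw [norm_sub_rev]
      exact hDlb _ ((hmem b).1 hbE) _ ((hmem a).2 haO)
  have hDr : ∀ n, D ≤ r n := by
    intro n
    obtain ⟨v, hv⟩ := hTne n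
    exact (hDleT n v hv).trans (le_csSup (hTbdd n) hv)
  -- the key contraction step
  have hstepf : ∀ n, f (n + 1) = Ξ (f n) := by
    intro n; simp only [hf, Function.iterate_succ_apply']
  have hiter : ∀ m n : ℕ, Ξ^[m] (f n) = f (m + n) := by
    intro m n; simp only [hf, Function.iterate_add_apply]
  have hkey : ∀ n, r (n + 1) ≤ η * r n + (1 - η) * D := by
    intro n
    have step : ∀ a b : ℕ, n ≤ a → n ≤ b → Even a → Odd b →
        ‖f (a + 1) - f (b + 1)‖ ≤ η * r n + (1 - η) * D := by
      intro a b hna hnb haE hbO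
      have hfa : f a ∈ Ω := (hmem a).1 haE
      have hfb : f b ∈ Δ := (hmem b).2 hbO
      have h1 := hcontr (f a) hfa (f b) hfb
      rw [← hstepf a, ← hstepf b] at h1
      refine h1.trans ?_
      have hsub : { v : ℝ |
          (∃ i j : ℕ, Odd ((i : ℤ) - j) ∧ v = ‖Ξ^[i] (f a) - Ξ^[j] (f a)‖) ∨
          (∃ k l : ℕ, Odd ((k : ℤ) - l) ∧ v = ‖Ξ^[k] (f b) - Ξ^[l] (f b)‖) ∨
          (∃ p q : ℕ, Even ((p : ℤ) - q) ∧ v = ‖Ξ^[p] (f a) - Ξ^[q] (f b)‖) } ⊆ T n := by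
        rintro v (⟨i, j, hod, rfl⟩ | ⟨k, l, hod, rfl⟩ | ⟨p, q, hev, rfl⟩)
        · exact ⟨i + a, j + a, le_add_self.trans' hna |>.trans le_rfl, hna.trans le_add_self,
            by rw [Int.odd_iff] at *; push_cast at *; omega,
            by rw [hiter, hiter]⟩
        · exact ⟨k + b, l + b, hnb.trans le_add_self, hnb.trans le_add_self,
            by rw [Int.odd_iff] at *; push_cast at *; omega,
            by rw [hiter, hiter]⟩
        · refine ⟨p + a, q + b, hna.trans le_add_self, hnb.trans le_add_self, ?_,
            by rw [hiter, hiter]⟩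
          rw [Int.even_iff] at hev
          rw [Int.odd_iff]
          rw [Nat.even_iff] at haE; rw [Nat.odd_iff] at hbO
          push_cast at *
          omega
      have hSne : { v : ℝ |
          (∃ i j : ℕ, Odd ((i : ℤ) - j) ∧ v = ‖Ξ^[i] (f a) - Ξ^[j] (f a)‖) ∨
          (∃ k l : ℕ, Odd ((k : ℤ) - l) ∧ v = ‖Ξ^[k] (f b) - Ξ^[l] (f b)‖) ∨
          (∃ p q : ℕ, Even ((p : ℤ) - q) ∧ v = ‖Ξ^[p] (f a) - Ξ^[q] (f b)‖) }.Nonempty :=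
        ⟨‖Ξ^[0] (f a) - Ξ^[0] (f b)‖, Or.inr (Or.inr ⟨0, 0, by simp, rfl⟩)⟩
      have hsup : sSup { v : ℝ |
          (∃ i j : ℕ, Odd ((i : ℤ) - j) ∧ v = ‖Ξ^[i] (f a) - Ξ^[j] (f a)‖) ∨
          (∃ k l : ℕ, Odd ((k : ℤ) - l) ∧ v = ‖Ξ^[k] (f b) - Ξ^[l] (f b)‖) ∨
          (∃ p q : ℕ, Even ((p : ℤ) - q) ∧ v = ‖Ξ^[p] (f a) - Ξ^[q] (f b)‖) } ≤ r n :=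
        csSup_le_csSup (hTbdd n) hSne hsub
      have := mul_le_mul_of_nonneg_left hsup hη0.le
      linarith
    apply csSup_le (hTne (n + 1))
    rintro v ⟨a, b, ha, hb, hodd, rfl⟩
    obtain ⟨a', rfl⟩ : ∃ a', a = a' + 1 := ⟨a - 1, by omega⟩
    obtain ⟨b', rfl⟩ : ∃ b', b = b' + 1 := ⟨b - 1, by omega⟩
    have ha' : n ≤ a' := by omega
    have hb' : n ≤ b' := by omega
    rcases Nat.even_or_odd a' with hE | hO
    · have : Odd b' := by
        rw [Nat.odd_iff]; rw [Nat.even_iff] at hE; rw [Int.odd_iff] at hodd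
        push_cast at hodd; omega
      exact step a' b' ha' hb' hE this
    · have : Even b' := by
        rw [Nat.even_iff]; rw [Nat.odd_iff] at hO; rw [Int.odd_iff] at hodd
        push_cast at hodd; omega
      rw [norm_sub_rev]
      exact step b' a' hb' ha' this hO
  -- geometric decay
  have hgeom : ∀ n, r n - D ≤ η ^ n * (r 0 - D) := by
    intro n
    induction n with
    | zero => simp
    | succ n ih =>
      have h1 := hkey n
      have h2 : η * (r n - D) ≤ η * (η ^ n * (r 0 - D)) :=
        mul_le_mul_of_nonneg_left ih hη0.le
      rw [pow_succ]
      nlinarith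
  have hrD : Tendsto r atTop (nhds D) := by
    have hup : Tendsto (fun n => D + η ^ n * (r 0 - D)) atTop (nhds D) := by
      have : Tendsto (fun n : ℕ => η ^ n) atTop (nhds 0) :=
        tendsto_pow_atTop_nhds_zero_of_lt_one hη0.le hη1
      have := (this.mul_const (r 0 - D)).const_add D
      simpa using this
    refine tendsto_of_tendsto_of_tendsto_of_le_of_le tendsto_const_nhds hup
      (fun n => hDr n) (fun n => by have := hgeom n; linarith)
  -- norms of the relevant differences tend to D
  have hmemT : ∀ n a b : ℕ, n ≤ a → n ≤ b → Odd ((a : ℤ) - b) → ‖f a - f b‖ ≤ r n := by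
    intro n a b ha hb hodd
    exact le_csSup (hTbdd n) ⟨a, b, ha, hb, hodd, rfl⟩
  have hDle : ∀ a b : ℕ, Odd ((a : ℤ) - b) → D ≤ ‖f a - f b‖ := by
    intro a b hodd
    exact hDleT 0 _ ⟨a, b, Nat.zero_le _, Nat.zero_le _, hodd, rfl⟩
  have h2n : Tendsto (fun n : ℕ => r (2 * n)) atTop (nhds D) :=
    hrD.comp (tendsto_atTop_mono (fun n => Nat.le_mul_of_pos_left n (by norm_num)) tendsto_id)
  have normtend : ∀ (g h : ℕ → ℕ), (∀ n, 2 * n ≤ g n) → (∀ n, 2 * n ≤ h n) →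
      (∀ n, Odd ((g n : ℤ) - h n)) →
      Tendsto (fun n => ‖f (g n) - f (h n)‖) atTop (nhds D) := by
    intro g h hg hh hodd
    refine tendsto_of_tendsto_of_tendsto_of_le_of_le tendsto_const_nhds h2n
      (fun n => hDle _ _ (hodd n)) (fun n => hmemT (2 * n) _ _ (hg n) (hh n) (hodd n))
  constructor
  · -- even case
    set A : ℕ → X := fun n => f (2 * n) - f (2 * n + 1) with hA
    set B : ℕ → X := fun n => f (2 * n + 2) - f (2 * n + 1) with hB
    have hAn : Tendsto (fun n => ‖A n‖) atTop (nhds D) :=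
      normtend (fun n => 2 * n) (fun n => 2 * n + 1) (fun n => le_rfl) (fun n => by omega)
        (fun n => by simp only [Int.odd_iff]; push_cast; omega)
    have hBn : Tendsto (fun n => ‖B n‖) atTop (nhds D) :=
      normtend (fun n => 2 * n + 2) (fun n => 2 * n + 1) (fun n => by omega) (fun n => by omega)
        (fun n => by simp only [Int.odd_iff]; push_cast; omega)
    have hABsum : ∀ n, 2 * D ≤ ‖A n + B n‖ := by
      intro n
      have hmid : ((1 : ℝ) / 2) • f (2 * n) + ((1 : ℝ) / 2) • f (2 * n + 2) ∈ Ω := by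
        apply hΩconv ((hmem (2 * n)).1 (by exact ⟨n, by ring⟩))
          ((hmem (2 * n + 2)).1 (by exact ⟨n + 1, by ring⟩)) (by norm_num) (by norm_num)
          (by norm_num)
      have hd := hDlb _ hmid _ ((hmem (2 * n + 1)).2 ⟨n, by ring⟩)
      have heq : ((1 : ℝ) / 2) • f (2 * n) + ((1 : ℝ) / 2) • f (2 * n + 2) - f (2 * n + 1)
          = ((1 : ℝ) / 2) • (A n + B n) := by
        simp only [hA, hB]
        module
      rw [heq, norm_smul, Real.norm_eq_abs] at hd
      rw [abs_of_pos (by norm_num : (0:ℝ) < 1/2)] at hd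
      linarith
    have := aux_uc_tendsto hDnonneg hAn hBn hABsum
    have heq : ∀ n, A n - B n = f (2 * n) - f (2 * n + 2) := by
      intro n; simp only [hA, hB]; abel
    simpa only [heq] using this
  · -- odd case
    set A : ℕ → X := fun n => f (2 * n + 1) - f (2 * n + 2) with hA
    set B : ℕ → X := fun n => f (2 * n + 3) - f (2 * n + 2) with hB
    have hAn : Tendsto (fun n => ‖A n‖) atTop (nhds D) :=
      normtend (fun n => 2 * n + 1) (fun n => 2 * n + 2) (fun n => by omega) (fun n => by omega)
        (fun n => by simp only [Int.odd_iff]; push_cast; omega)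
    have hBn : Tendsto (fun n => ‖B n‖) atTop (nhds D) :=
      normtend (fun n => 2 * n + 3) (fun n => 2 * n + 2) (fun n => by omega) (fun n => by omega)
        (fun n => by simp only [Int.odd_iff]; push_cast; omega)
    have hABsum : ∀ n, 2 * D ≤ ‖A n + B n‖ := by
      intro n
      have hmid : ((1 : ℝ) / 2) • f (2 * n + 1) + ((1 : ℝ) / 2) • f (2 * n + 3) ∈ Δ := by
        apply hΔconv ((hmem (2 * n + 1)).2 ⟨n, by ring⟩)
          ((hmem (2 * n + 3)).2 ⟨n + 1, by ring⟩) (by norm_num) (by norm_num) (by norm_num)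
      have hd := hDlb _ ((hmem (2 * n + 2)).1 ⟨n + 1, by ring⟩) _ hmid
      rw [norm_sub_rev] at hd
      have heq : ((1 : ℝ) / 2) • f (2 * n + 1) + ((1 : ℝ) / 2) • f (2 * n + 3) - f (2 * n + 2)
          = ((1 : ℝ) / 2) • (A n + B n) := by
        simp only [hA, hB]
        module
      rw [heq, norm_smul, Real.norm_eq_abs] at hd
      rw [abs_of_pos (by norm_num : (0:ℝ) < 1/2)] at hd
      linarith
    have := aux_uc_tendsto hDnonneg hAn hBn hABsum
    have heq : ∀ n, A n - B n = f (2 * n + 1) - f (2 * n + 3) := by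
      intro n; simp only [hA, hB]; abel
    simpa only [heq] using this
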